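/- arXiv:2304.12541 — 4 statements merged into one kernel-verified Lean document; each statement's English description precedes it below -/
import Mathlib

section
/- Let (C, Z) be an ℝᵐ × ℝⁿ-valued random vector whose joint law has a strictly positive density q with respect to Lebesgue measure on ℝᵐ × ℝⁿ. Let φ(z) = (2π)^{−n/2} exp(−‖z‖²/2) denote the standard Gaussian density on ℝⁿ. If log q(c,z) − log q(c,z') = log φ(z) − log φ(z') for all c ∈ ℝᵐ and all z, z' ∈ ℝⁿ, then C and Z are independent random variables and the law of Z is the standard Gaussian measure N(0, Iₙ) on ℝⁿ. -/
open scoped ENNReal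


open MeasureTheory ProbabilityTheory

/-- If the joint law of `(C, Z)` has a strictly positive density `q` with respect to
Lebesgue measure on ℝᵐ × ℝⁿ and
`log q (c, z) − log q (c, z') = log φ z − log φ z'` for all `c, z, z'`, where `φ` is the
standard Gaussian density on ℝⁿ, then `C` and `Z` are independent and the law of `Z` is
the standard Gaussian measure `N(0, Iₙ)` (the measure with density `φ` w.r.t. Lebesgue). -/
theorem stmt1 (m n : ℕ) (Ω : Type*) [MeasureSpace Ω]
    [IsProbabilityMeasure (ℙ : Measure Ω)]
    (C : Ω → EuclideanSpace ℝ (Fin m)) (Z : Ω → EuclideanSpace ℝ (Fin n))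
    (hC : Measurable C) (hZ : Measurable Z)
    (q : EuclideanSpace ℝ (Fin m) × EuclideanSpace ℝ (Fin n) → ℝ)
    (hq_meas : Measurable q) (hq_pos : ∀ x, 0 < q x)
    (hlaw : Measure.map (fun ω => (C ω, Z ω)) ℙ
      = volume.withDensity (fun x => ENNReal.ofReal (q x)))
    (φ : EuclideanSpace ℝ (Fin n) → ℝ)
    (hφ : ∀ z, φ z = (2 * Real.pi) ^ (-(n : ℝ) / 2) * Real.exp (-‖z‖ ^ 2 / 2))
    (h : ∀ (c : EuclideanSpace ℝ (Fin m)) (z z' : EuclideanSpace ℝ (Fin n)),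
      Real.log (q (c, z)) - Real.log (q (c, z'))
        = Real.log (φ z) - Real.log (φ z')) :
    IndepFun C Z ℙ ∧
    Measure.map Z ℙ = volume.withDensity (fun z => ENNReal.ofReal (φ z)) := by
  classical
  have hπ : (0 : ℝ) < 2 * Real.pi := by positivity
  have hφ_pos : ∀ z, 0 < φ z := fun z => by rw [hφ z]; positivity
  have hφ_eq : φ = fun z : EuclideanSpace ℝ (Fin n) =>
      (2 * Real.pi) ^ (-(n : ℝ) / 2) * Real.exp (-(1/2) * ‖z‖ ^ 2) := by
    funext z; rw [hφ z]; congr 1; ring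
  -- Integrability of the Gaussian density
  have hint_c : Integrable (fun v : EuclideanSpace ℝ (Fin n) =>
      Real.exp (-(1/2) * ‖v‖ ^ 2)) := by
    have hC' := GaussianFourier.integrable_cexp_neg_mul_sq_norm_add (V := EuclideanSpace ℝ (Fin n))
      (b := (1/2 : ℂ)) (by norm_num) 0 0
    refine hC'.re.congr (Filter.Eventually.of_forall fun v => ?_)
    have h0 : -(1/2 : ℂ) * (‖v‖ : ℂ) ^ 2 +
        0 * ((inner ℝ (0 : EuclideanSpace ℝ (Fin n)) v : ℝ) : ℂ)
        = ((-(1/2) * ‖v‖ ^ 2 : ℝ) : ℂ) := by push_cast; ring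
    simp only [h0, RCLike.re_to_complex, Complex.exp_ofReal_re]
  have hφ_int : Integrable φ := by
    rw [hφ_eq]; exact hint_c.const_mul _
  have hφ_integral : ∫ z, φ z = 1 := by
    rw [hφ_eq]
    rw [integral_const_mul,
      GaussianFourier.integral_rexp_neg_mul_sq_norm (show (0:ℝ) < 1/2 by norm_num),
      finrank_euclideanSpace_fin,
      show Real.pi / (1/2) = 2 * Real.pi by ring,
      ← Real.rpow_add hπ, show -(n:ℝ)/2 + (n:ℝ)/2 = 0 by ring, Real.rpow_zero]
  have hΦ_lint : ∫⁻ z, ENNReal.ofReal (φ z) = 1 := by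
    rw [← ofReal_integral_eq_lintegral_ofReal hφ_int
      (Filter.Eventually.of_forall fun z => (hφ_pos z).le), hφ_integral]
    simp
  -- Factorization of q
  set g : EuclideanSpace ℝ (Fin m) → ℝ := fun c => q (c, 0) / φ 0 with hg_def
  have hg_pos : ∀ c, 0 < g c := fun c => div_pos (hq_pos _) (hφ_pos 0)
  have hfact : ∀ c z, q (c, z) = g c * φ z := by
    intro c z
    have h1 := h c z 0
    have h2 : Real.log (q (c, z)) = Real.log (g c * φ z) := by
      rw [Real.log_mul (ne_of_gt (hg_pos c)) (ne_of_gt (hφ_pos z)), hg_def,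
        Real.log_div (ne_of_gt (hq_pos _)) (ne_of_gt (hφ_pos 0))]
      linarith
    have h3 := congrArg Real.exp h2
    rwa [Real.exp_log (hq_pos _), Real.exp_log (mul_pos (hg_pos c) (hφ_pos z))] at h3
  -- Measurability
  have hφ_meas : Measurable φ := by
    rw [hφ_eq]
    exact ((Real.continuous_exp.comp
      (continuous_const.mul (continuous_norm.pow 2))).measurable).const_mul _
  have hg_meas : Measurable g :=
    (hq_meas.comp (measurable_id.prodMk measurable_const)).div_const _
  set G : EuclideanSpace ℝ (Fin m) → ℝ≥0∞ := fun c => ENNReal.ofReal (g c) with hG_def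
  set Φ : EuclideanSpace ℝ (Fin n) → ℝ≥0∞ := fun z => ENNReal.ofReal (φ z) with hΦ_def
  have hG_meas : Measurable G := hg_meas.ennreal_ofReal
  have hΦ_meas : Measurable Φ := hφ_meas.ennreal_ofReal
  have hdens : (fun x : EuclideanSpace ℝ (Fin m) × EuclideanSpace ℝ (Fin n) =>
      ENNReal.ofReal (q x)) = fun x => G x.1 * Φ x.2 := by
    funext x
    rw [show q x = g x.1 * φ x.2 from hfact x.1 x.2, ENNReal.ofReal_mul (hg_pos _).le]
  set A : Measure (EuclideanSpace ℝ (Fin m)) := volume.withDensity G with hA_def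
  set B : Measure (EuclideanSpace ℝ (Fin n)) := volume.withDensity Φ with hB_def
  have hB_univ : B Set.univ = 1 := by
    rw [hB_def, withDensity_apply _ MeasurableSet.univ, setLIntegral_univ, hΦ_lint]
  -- total mass computation gives A univ = 1
  have hμ_prob : IsProbabilityMeasure (Measure.map (fun ω => (C ω, Z ω)) ℙ) :=
    Measure.isProbabilityMeasure_map (hC.prodMk hZ).aemeasurable
  have hA_univ : A Set.univ = 1 := by
    have h1 : (Measure.map (fun ω => (C ω, Z ω)) ℙ) Set.univ = 1 := hμ_prob.measure_univ
    rw [hlaw, hdens, withDensity_apply _ MeasurableSet.univ, setLIntegral_univ,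
      Measure.volume_eq_prod, lintegral_prod_mul hG_meas.aemeasurable
        hΦ_meas.aemeasurable, hΦ_lint, mul_one] at h1
    rw [hA_def, withDensity_apply _ MeasurableSet.univ, setLIntegral_univ, h1]
  have hA_prob : IsProbabilityMeasure A := ⟨hA_univ⟩
  have hB_prob : IsProbabilityMeasure B := ⟨hB_univ⟩
  -- the joint density measure is the product A.prod B
  have hprod : volume.withDensity (fun x : EuclideanSpace ℝ (Fin m) ×
      EuclideanSpace ℝ (Fin n) => ENNReal.ofReal (q x)) = A.prod B := by
    rw [hdens]
    refine (Measure.prod_eq fun s t hs ht => ?_).symm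
    rw [Measure.volume_eq_prod, withDensity_apply _ (hs.prod ht),
      ← Measure.prod_restrict,
      lintegral_prod_mul hG_meas.aemeasurable hΦ_meas.aemeasurable,
      hA_def, hB_def, withDensity_apply _ hs, withDensity_apply _ ht]
  -- marginals
  have hmapZ : Measure.map Z ℙ = B := by
    have : Measure.map Z ℙ = Measure.map Prod.snd (Measure.map (fun ω => (C ω, Z ω)) ℙ) := by
      rw [Measure.map_map measurable_snd (hC.prodMk hZ)]
      rfl
    rw [this, hlaw, hprod, Measure.map_snd_prod, hA_univ, one_smul]
  have hmapC : Measure.map C ℙ = A := by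
    have : Measure.map C ℙ = Measure.map Prod.fst (Measure.map (fun ω => (C ω, Z ω)) ℙ) := by
      rw [Measure.map_map measurable_fst (hC.prodMk hZ)]
      rfl
    rw [this, hlaw, hprod, Measure.map_fst_prod, hB_univ, one_smul]
  refine ⟨?_, hmapZ⟩
  rw [indepFun_iff_map_prod_eq_prod_map_map hC.aemeasurable hZ.aemeasurable,
    hlaw, hprod, hmapC, hmapZ]
end

section
/- Let g : ℝᵈ → ℝᵐ × ℝⁿ be a measurable equivalence (a bijection that is measurable with measurable inverse, with respect to the Borel σ-algebras). Let λ be an ℝᵈ-valued random variable on a probability space (Ω, F, ℙ) and set (C, Z) = g(λ), so C = (g ∘ λ)₁ and Z = (g ∘ λ)₂. If C and Z are independent, then for Law(C)-almost every c ∈ ℝᵐ, the conditional distribution of λ given C = c equals the pushforward of Law(Z) under the map z ↦ g⁻¹(c, z). -/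
open MeasureTheory ProbabilityTheory

/-- Let `g : ℝᵈ ≃ᵐ ℝᵐ × ℝⁿ` be a measurable equivalence, `lam` an ℝᵈ-valued random
variable, and `(C, Z) = g ∘ lam`. If `C` and `Z` are independent, then for
`Law(C)`-almost every `c`, the conditional distribution of `lam` given `C = c` is the
pushforward of `Law(Z)` under `z ↦ g⁻¹ (c, z)`. -/
theorem stmt3 (d m n : ℕ) (Ω : Type*) [MeasureSpace Ω]
    [IsProbabilityMeasure (ℙ : Measure Ω)]
    (g : EuclideanSpace ℝ (Fin d) ≃ᵐ
      (EuclideanSpace ℝ (Fin m) × EuclideanSpace ℝ (Fin n)))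
    (lam : Ω → EuclideanSpace ℝ (Fin d)) (hlam : Measurable lam)
    (C : Ω → EuclideanSpace ℝ (Fin m)) (Z : Ω → EuclideanSpace ℝ (Fin n))
    (hC : C = fun ω => (g (lam ω)).1) (hZ : Z = fun ω => (g (lam ω)).2)
    (hindep : IndepFun C Z ℙ) :
    ∀ᵐ c ∂(Measure.map C ℙ),
      condDistrib lam C ℙ c
        = Measure.map (fun z => g.symm (c, z)) (Measure.map Z ℙ) := by
  have hCm : Measurable C := by rw [hC]; exact (g.measurable.comp hlam).fst
  have hZm : Measurable Z := by rw [hZ]; exact (g.measurable.comp hlam).snd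
  set ν := Measure.map Z ℙ with hν
  have : IsProbabilityMeasure ν := Measure.isProbabilityMeasure_map hZm.aemeasurable
  set κ : Kernel (EuclideanSpace ℝ (Fin m)) (EuclideanSpace ℝ (Fin d)) :=
    Kernel.map (Kernel.id ×ₖ Kernel.const _ ν) g.symm with hκdef
  have hκap : ∀ c, κ c = Measure.map (fun z => g.symm (c, z)) ν := by
    intro c
    rw [hκdef, Kernel.map_apply _ g.symm.measurable, Kernel.prod_apply,
      Kernel.id_apply, Kernel.const_apply, Measure.dirac_prod,
      Measure.map_map g.symm.measurable measurable_prodMk_left]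
    rfl
  have hMarkov : IsMarkovKernel κ := by
    rw [hκdef]
    exact Kernel.IsMarkovKernel.map _ g.symm.measurable
  have hprod : Measure.map (fun ω => (C ω, Z ω)) ℙ = (Measure.map C ℙ).prod ν := by
    rw [hν]
    exact (indepFun_iff_map_prod_eq_prod_map_map hCm.aemeasurable hZm.aemeasurable).mp hindep
  have hκeq : Measure.map (fun ω => (C ω, lam ω)) ℙ = Measure.map C ℙ ⊗ₘ κ := by
    have hφ : Measurable fun p : EuclideanSpace ℝ (Fin m) × EuclideanSpace ℝ (Fin n) =>
        (p.1, g.symm p) := measurable_fst.prodMk g.symm.measurable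
    have hcomp : (fun ω => (C ω, lam ω))
        = (fun p : EuclideanSpace ℝ (Fin m) × EuclideanSpace ℝ (Fin n) => (p.1, g.symm p))
          ∘ (fun ω => (C ω, Z ω)) := by
      funext ω
      simp only [Function.comp_apply, hC, hZ]
      exact Prod.ext rfl (g.symm_apply_apply (lam ω)).symm
    ext s hs
    rw [hcomp, ← Measure.map_map hφ (hCm.prodMk hZm), hprod,
      Measure.map_apply hφ hs, Measure.prod_apply (hφ hs),
      Measure.compProd_apply hs]
    refine lintegral_congr fun c => ?_
    rw [hκap c, Measure.map_apply
      (show Measurable fun z => g.symm (c, z) from g.symm.measurable.comp measurable_prodMk_left)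
      (measurable_prodMk_left hs)]
    rfl
  have h := condDistrib_ae_eq_of_measure_eq_compProd_of_measurable hCm hlam hκeq
  filter_upwards [h] with c hc
  rw [hc, hκap]
end

section
/- Let g : ℝᵈ → ℝᵐ × ℝⁿ be a measurable equivalence (a bijection that is measurable with measurable inverse), let λ be an ℝᵈ-valued random variable, and set (C, Z) = g(λ). Suppose the joint law of (C, Z) has a strictly positive density q on ℝᵐ × ℝⁿ satisfying log q(c,z) − log q(c,z') = log φ(z) − log φ(z') for all c ∈ ℝᵐ and z, z' ∈ ℝⁿ, where φ(z) = (2π)^{−n/2} exp(−‖z‖²/2) is the standard Gaussian density on ℝⁿ. Then for Law(C)-almost every c̃ ∈ ℝᵐ, the conditional distribution of λ given C = c̃ equals the pushforward of the standard Gaussian measure N(0, Iₙ) on ℝⁿ under the map z ↦ g⁻¹(c̃, z). -/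
open MeasureTheory ProbabilityTheory

/-- PI-INN asymptotic correctness: if `g : ℝᵈ ≃ᵐ ℝᵐ × ℝⁿ`, `(C, Z) = g ∘ lam`, the joint
law of `(C, Z)` has a strictly positive density `q` satisfying the vanishing-independence
condition `log q (c, z) − log q (c, z') = log φ z − log φ z'` with `φ` the standard
Gaussian density on ℝⁿ, then for `Law(C)`-a.e. `c̃`, the conditional distribution of
`lam` given `C = c̃` equals the pushforward under `z ↦ g⁻¹ (c̃, z)` of the standard
Gaussian measure `N(0, Iₙ)` (the measure with density `φ` w.r.t. Lebesgue). -/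
theorem stmt4 (d m n : ℕ) (Ω : Type*) [MeasureSpace Ω]
    [IsProbabilityMeasure (ℙ : Measure Ω)]
    (g : EuclideanSpace ℝ (Fin d) ≃ᵐ
      (EuclideanSpace ℝ (Fin m) × EuclideanSpace ℝ (Fin n)))
    (lam : Ω → EuclideanSpace ℝ (Fin d)) (hlam : Measurable lam)
    (C : Ω → EuclideanSpace ℝ (Fin m)) (Z : Ω → EuclideanSpace ℝ (Fin n))
    (hC : C = fun ω => (g (lam ω)).1) (hZ : Z = fun ω => (g (lam ω)).2)
    (q : EuclideanSpace ℝ (Fin m) × EuclideanSpace ℝ (Fin n) → ℝ)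
    (hq_meas : Measurable q) (hq_pos : ∀ x, 0 < q x)
    (hjoint : Measure.map (fun ω => (C ω, Z ω)) ℙ
      = volume.withDensity (fun x => ENNReal.ofReal (q x)))
    (φ : EuclideanSpace ℝ (Fin n) → ℝ)
    (hφ : ∀ z, φ z = (2 * Real.pi) ^ (-(n : ℝ) / 2) * Real.exp (-‖z‖ ^ 2 / 2))
    (h : ∀ (c : EuclideanSpace ℝ (Fin m)) (z z' : EuclideanSpace ℝ (Fin n)),
      Real.log (q (c, z)) - Real.log (q (c, z'))
        = Real.log (φ z) - Real.log (φ z')) :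
    ∀ᵐ c ∂(Measure.map C ℙ),
      condDistrib lam C ℙ c
        = Measure.map (fun z => g.symm (c, z))
            (volume.withDensity (fun z => ENNReal.ofReal (φ z))) := by
  have hπ : (0:ℝ) < 2 * Real.pi := by positivity
  have hφpos : ∀ z, 0 < φ z := fun z => by rw [hφ]; positivity
  have hφeq : φ = fun z => (2 * Real.pi) ^ (-(n : ℝ) / 2) * Real.exp (-‖z‖ ^ 2 / 2) :=
    funext hφ
  have hφm : Measurable φ := by
    rw [hφeq]
    exact (((measurable_norm.pow_const 2).neg.div_const 2).exp).const_mul _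
  -- measurability of C, Z
  have hCm : Measurable C := by rw [hC]; exact measurable_fst.comp (g.measurable.comp hlam)
  have hZm : Measurable Z := by rw [hZ]; exact measurable_snd.comp (g.measurable.comp hlam)
  have hCZm : Measurable fun ω => (C ω, Z ω) := hCm.prodMk hZm
  have hlam_eq : ∀ ω, lam ω = g.symm (C ω, Z ω) := by
    intro ω; rw [hC, hZ]; simp
  -- factorization of the density
  set f : EuclideanSpace ℝ (Fin m) → ℝ := fun c => q (c, 0) / φ 0 with hf_def
  have hfpos : ∀ c, 0 < f c := fun c => div_pos (hq_pos _) (hφpos 0)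
  have hfm : Measurable f :=
    (hq_meas.comp (measurable_id.prodMk measurable_const)).div_const _
  have hfact : ∀ c z, q (c, z) = f c * φ z := by
    intro c z
    have h0 := h c z 0
    have hA := hq_pos (c, z); have hB := hq_pos (c, 0)
    have hP := hφpos z; have hQ := hφpos 0
    have hlog : Real.log (q (c, z)) = Real.log (f c * φ z) := by
      rw [hf_def, Real.log_mul (by positivity) (ne_of_gt hP),
        Real.log_div (ne_of_gt hB) (ne_of_gt hQ)]
      linarith
    calc q (c, z) = Real.exp (Real.log (q (c, z))) := (Real.exp_log hA).symm
      _ = Real.exp (Real.log (f c * φ z)) := by rw [hlog]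
      _ = f c * φ z := Real.exp_log (by positivity)
  have hq_eq : ∀ p : EuclideanSpace ℝ (Fin m) × EuclideanSpace ℝ (Fin n),
      ENNReal.ofReal (q p) = ENNReal.ofReal (f p.1) * ENNReal.ofReal (φ p.2) := by
    intro p
    have := hfact p.1 p.2
    rw [Prod.mk.eta] at this
    rw [this, ENNReal.ofReal_mul (hfpos _).le]
  -- the Gaussian density integrates to 1
  have harg : ∀ x : ℝ, -x / 2 = -(1/2 : ℝ) * x := fun x => by ring
  have hint_exp : Integrable (fun v : EuclideanSpace ℝ (Fin n) =>
      Real.exp (-(1/2 : ℝ) * ‖v‖ ^ 2)) := by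
    have h1 := (GaussianFourier.integrable_cexp_neg_mul_sq_norm_add
      (V := EuclideanSpace ℝ (Fin n)) (b := (1/2 : ℂ)) (by norm_num) 0 0).norm
    refine h1.congr (Filter.Eventually.of_forall fun v => ?_)
    have hre : (-(1/2 : ℂ) * (‖v‖ : ℂ) ^ 2
          + 0 * ((inner ℝ (0 : EuclideanSpace ℝ (Fin n)) v : ℝ) : ℂ))
        = ((-(1/2 : ℝ) * ‖v‖ ^ 2 : ℝ) : ℂ) := by push_cast; ring
    simp only [hre, Complex.norm_exp, Complex.ofReal_re]
  have hφ_int : Integrable φ := by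
    rw [hφeq]
    simp only [harg]
    exact hint_exp.const_mul _
  have hφ_intval : ∫ z, φ z = 1 := by
    rw [hφeq]
    simp only [harg]
    rw [MeasureTheory.integral_const_mul,
      GaussianFourier.integral_rexp_neg_mul_sq_norm (by norm_num : (0:ℝ) < 1/2),
      finrank_euclideanSpace_fin,
      show Real.pi / (1/2 : ℝ) = 2 * Real.pi by ring,
      ← Real.rpow_add hπ,
      show -(1/2 : ℝ) * (n:ℝ) + (n:ℝ)/2 = 0 by ring, Real.rpow_zero]
  have hν1 : ∫⁻ z, ENNReal.ofReal (φ z) = 1 := by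
    rw [← ofReal_integral_eq_lintegral_ofReal hφ_int
      (Filter.Eventually.of_forall fun z => (hφpos z).le), hφ_intval, ENNReal.ofReal_one]
  set ν : Measure (EuclideanSpace ℝ (Fin n)) :=
    volume.withDensity (fun z => ENNReal.ofReal (φ z)) with hν_def
  have hνprob : IsProbabilityMeasure ν :=
    ⟨by rw [hν_def, withDensity_apply _ MeasurableSet.univ, setLIntegral_univ, hν1]⟩
  -- the joint density integrates to 1, hence the marginal density integrates to 1
  haveI hPCZ : IsProbabilityMeasure (Measure.map (fun ω => (C ω, Z ω)) ℙ) :=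
    Measure.isProbabilityMeasure_map hCZm.aemeasurable
  have hq1 : ∫⁻ p, ENNReal.ofReal (q p) = 1 := by
    have huniv := measure_univ (μ := Measure.map (fun ω => (C ω, Z ω)) ℙ)
    rwa [hjoint, withDensity_apply _ MeasurableSet.univ, setLIntegral_univ] at huniv
  have hf1 : ∫⁻ c, ENNReal.ofReal (f c) = 1 := by
    have hT : ∫⁻ p, ENNReal.ofReal (q p)
        = (∫⁻ c, ENNReal.ofReal (f c)) * ∫⁻ z, ENNReal.ofReal (φ z) := by
      rw [MeasureTheory.Measure.volume_eq_prod, lintegral_congr hq_eq]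
      exact lintegral_prod_mul hfm.ennreal_ofReal.aemeasurable
        hφm.ennreal_ofReal.aemeasurable
    rw [hq1, hν1, mul_one] at hT
    exact hT.symm
  set μf : Measure (EuclideanSpace ℝ (Fin m)) :=
    volume.withDensity (fun c => ENNReal.ofReal (f c)) with hμf_def
  have hμfprob : IsProbabilityMeasure μf :=
    ⟨by rw [hμf_def, withDensity_apply _ MeasurableSet.univ, setLIntegral_univ, hf1]⟩
  -- the joint law is the product measure
  have hprod : (volume : Measure
        (EuclideanSpace ℝ (Fin m) × EuclideanSpace ℝ (Fin n))).withDensity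
      (fun x => ENNReal.ofReal (q x)) = μf.prod ν := by
    refine (Measure.prod_eq fun s t hs ht => ?_).symm
    rw [withDensity_apply _ (hs.prod ht), hμf_def, hν_def, withDensity_apply _ hs,
      withDensity_apply _ ht, MeasureTheory.Measure.volume_eq_prod, ← Measure.prod_restrict,
      lintegral_congr hq_eq]
    exact lintegral_prod_mul hfm.ennreal_ofReal.aemeasurable
      hφm.ennreal_ofReal.aemeasurable
  have hmapCZ : Measure.map (fun ω => (C ω, Z ω)) ℙ = μf.prod ν := by
    rw [hjoint, hprod]
  have hmapC : Measure.map C ℙ = μf := by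
    have hfst : C = Prod.fst ∘ fun ω => (C ω, Z ω) := rfl
    rw [hfst, ← Measure.map_map measurable_fst hCZm, hmapCZ, Measure.map_fst_prod,
      measure_univ, one_smul]
  -- the kernel
  set κ : Kernel (EuclideanSpace ℝ (Fin m)) (EuclideanSpace ℝ (Fin d)) :=
    Kernel.map (Kernel.id ×ₖ Kernel.const _ ν) g.symm with hκ_def
  haveI : IsMarkovKernel κ := by
    rw [hκ_def]
    exact Kernel.IsMarkovKernel.map _ g.symm.measurable
  have hκ_apply : ∀ c, κ c = Measure.map (fun z => g.symm (c, z)) ν := by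
    intro c
    rw [hκ_def, Kernel.map_apply _ g.symm.measurable, Kernel.prod_apply, Kernel.id_apply,
      Kernel.const_apply, Measure.dirac_prod,
      Measure.map_map g.symm.measurable measurable_prodMk_left]
    rfl
  -- the compProd identity
  have hcomp : Measure.map (fun ω => (C ω, lam ω)) ℙ = (Measure.map C ℙ) ⊗ₘ κ := by
    rw [hmapC]
    have hh : Measurable fun p : EuclideanSpace ℝ (Fin m) × EuclideanSpace ℝ (Fin n) =>
        (p.1, g.symm p) := measurable_fst.prodMk g.symm.measurable
    have hmapLHS : Measure.map (fun ω => (C ω, lam ω)) ℙ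
        = Measure.map (fun p : EuclideanSpace ℝ (Fin m) × EuclideanSpace ℝ (Fin n) =>
            (p.1, g.symm p)) (μf.prod ν) := by
      rw [← hmapCZ, Measure.map_map hh hCZm]
      congr 1
      funext ω
      simp [Function.comp, hlam_eq ω]
    rw [hmapLHS]
    ext s hs
    rw [Measure.map_apply hh hs, Measure.prod_apply (hh hs), Measure.compProd_apply hs]
    refine lintegral_congr fun c => ?_
    have hgc : Measurable fun z : EuclideanSpace ℝ (Fin n) => g.symm (c, z) :=
      g.symm.measurable.comp measurable_prodMk_left
    rw [hκ_apply c, Measure.map_apply hgc (measurable_prodMk_left hs)]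
    rfl
  have hae := condDistrib_ae_eq_of_measure_eq_compProd_of_measurable hCm hlam (κ := κ) hcomp
  filter_upwards [hae] with c hc
  rw [hc, hκ_apply c]
end

section
/- Fix integers 0 < f < F and functions s, t : ℝ^f → ℝ^{F−f} that are differentiable at a point h₁ ∈ ℝ^f. Define the affine coupling map Φ : ℝ^f × ℝ^{F−f} → ℝ^f × ℝ^{F−f} by Φ(h₁, h₂) = (h₁, h₂ ⊙ exp(s(h₁)) + t(h₁)), where ⊙ denotes componentwise multiplication and exp is applied componentwise. Then for every h₂ ∈ ℝ^{F−f}, Φ is differentiable at (h₁, h₂), and the determinant of its Fréchet derivative at (h₁, h₂), viewed as a linear endomorphism of ℝ^f × ℝ^{F−f}, equals exp(∑_{i=1}^{F−f} s(h₁)_i) = ∏_{i=1}^{F−f} exp(s(h₁)_i). In particular this determinant is strictly positive and independent of h₂. -/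
open ContinuousLinearMap in
private lemma det_block_aux (a b : ℕ) (e : Fin b → ℝ)
    (L : ((Fin a → ℝ) × (Fin b → ℝ)) →ₗ[ℝ] ((Fin a → ℝ) × (Fin b → ℝ)))
    (hL1 : ∀ x, (L x).1 = x.1)
    (hL2 : ∀ v i, (L ((0 : Fin a → ℝ), v)).2 i = e i * v i) :
    LinearMap.det L = ∏ i, e i := by
  classical
  set B := (Pi.basisFun ℝ (Fin a)).prod (Pi.basisFun ℝ (Fin b)) with hB
  have hM : LinearMap.toMatrix B B L =
      Matrix.fromBlocks 1 0
        (Matrix.of fun i j => (L ((Pi.basisFun ℝ (Fin a)) j, 0)).2 i)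
        (Matrix.diagonal e) := by
    ext i j
    cases i with
    | inl i =>
      cases j with
      | inl j =>
        simp [LinearMap.toMatrix_apply, hB, hL1, Matrix.one_apply, Pi.single_apply, eq_comm]
      | inr j =>
        simp [LinearMap.toMatrix_apply, hB, hL1]
    | inr i =>
      cases j with
      | inl j =>
        simp [LinearMap.toMatrix_apply, hB]
      | inr j =>
        simp [LinearMap.toMatrix_apply, hB, hL2, Matrix.diagonal, Pi.single_apply]
  rw [← LinearMap.det_toMatrix B, hM, Matrix.det_fromBlocks_zero₁₂, Matrix.det_one,
    Matrix.det_diagonal, one_mul]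

open ContinuousLinearMap in
private lemma coupling_hasFDerivAt_aux (f m : ℕ) (s t : (Fin f → ℝ) → (Fin m → ℝ))
    (h₁ : Fin f → ℝ) (h₂ : Fin m → ℝ)
    (hs : DifferentiableAt ℝ s h₁) (ht : DifferentiableAt ℝ t h₁) :
    HasFDerivAt (fun h : (Fin f → ℝ) × (Fin m → ℝ) =>
        ((h.1, fun i => h.2 i * Real.exp (s h.1 i) + t h.1 i) :
          (Fin f → ℝ) × (Fin m → ℝ)))
      ((fst ℝ _ _).prod (ContinuousLinearMap.pi fun i =>
        h₂ i • (Real.exp (s h₁ i) •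
          ((proj i).comp ((fderiv ℝ s h₁).comp (fst ℝ (Fin f → ℝ) (Fin m → ℝ)))))
        + Real.exp (s h₁ i) • ((proj i).comp (snd ℝ (Fin f → ℝ) (Fin m → ℝ)))
        + (proj i).comp ((fderiv ℝ t h₁).comp (fst ℝ (Fin f → ℝ) (Fin m → ℝ)))))
      (h₁, h₂) := by
  apply HasFDerivAt.prodMk (hasFDerivAt_fst)
  rw [hasFDerivAt_pi']
  intro i
  have hs1 : HasFDerivAt (fun h : (Fin f → ℝ) × (Fin m → ℝ) => s h.1)
      ((fderiv ℝ s h₁).comp (fst ℝ _ _)) (h₁, h₂) :=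
    (hs.hasFDerivAt).comp _ hasFDerivAt_fst
  have hsi : HasFDerivAt (fun h : (Fin f → ℝ) × (Fin m → ℝ) => s h.1 i)
      ((proj i).comp ((fderiv ℝ s h₁).comp (fst ℝ _ _))) (h₁, h₂) :=
    (hasFDerivAt_pi'.mp hs1) i
  have ht1 : HasFDerivAt (fun h : (Fin f → ℝ) × (Fin m → ℝ) => t h.1)
      ((fderiv ℝ t h₁).comp (fst ℝ _ _)) (h₁, h₂) :=
    (ht.hasFDerivAt).comp _ hasFDerivAt_fst
  have hti : HasFDerivAt (fun h : (Fin f → ℝ) × (Fin m → ℝ) => t h.1 i)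
      ((proj i).comp ((fderiv ℝ t h₁).comp (fst ℝ _ _))) (h₁, h₂) :=
    (hasFDerivAt_pi'.mp ht1) i
  have hvi : HasFDerivAt (fun h : (Fin f → ℝ) × (Fin m → ℝ) => h.2 i)
      ((proj i).comp (snd ℝ _ _)) (h₁, h₂) :=
    (hasFDerivAt_pi'.mp hasFDerivAt_snd) i
  have hmul := (hvi.mul hsi.exp).add hti
  convert hmul using 1
  · rfl
  · simp [ContinuousLinearMap.comp_add, smul_smul, mul_comm]

/-- The affine coupling map `Φ (h₁, h₂) = (h₁, h₂ ⊙ exp (s h₁) + t h₁)` with `s, t`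
differentiable at `h₁` is differentiable at every `(h₁, h₂)`, and the determinant of
its Fréchet derivative there equals `exp (∑ i, s h₁ i) = ∏ i, exp (s h₁ i)`; in
particular the determinant is strictly positive (and does not depend on `h₂`). -/
theorem stmt6 (f F : ℕ) (hf : 0 < f) (hfF : f < F)
    (s t : (Fin f → ℝ) → (Fin (F - f) → ℝ)) (h₁ : Fin f → ℝ)
    (hs : DifferentiableAt ℝ s h₁) (ht : DifferentiableAt ℝ t h₁)
    (Φ : ((Fin f → ℝ) × (Fin (F - f) → ℝ)) → ((Fin f → ℝ) × (Fin (F - f) → ℝ)))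
    (hΦ : ∀ h : (Fin f → ℝ) × (Fin (F - f) → ℝ),
      Φ h = (h.1, fun i => h.2 i * Real.exp (s h.1 i) + t h.1 i)) :
    ∀ h₂ : Fin (F - f) → ℝ,
      DifferentiableAt ℝ Φ (h₁, h₂) ∧
      LinearMap.det (fderiv ℝ Φ (h₁, h₂)).toLinearMap = Real.exp (∑ i, s h₁ i) ∧
      LinearMap.det (fderiv ℝ Φ (h₁, h₂)).toLinearMap = ∏ i, Real.exp (s h₁ i) ∧
      0 < LinearMap.det (fderiv ℝ Φ (h₁, h₂)).toLinearMap := by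
  intro h₂
  have hΦeq : Φ = fun h : (Fin f → ℝ) × (Fin (F - f) → ℝ) =>
      ((h.1, fun i => h.2 i * Real.exp (s h.1 i) + t h.1 i) :
        (Fin f → ℝ) × (Fin (F - f) → ℝ)) := funext hΦ
  have hD := coupling_hasFDerivAt_aux f (F - f) s t h₁ h₂ hs ht
  rw [← hΦeq] at hD
  have hdiff : DifferentiableAt ℝ Φ (h₁, h₂) := hD.differentiableAt
  have hfd := hD.fderiv
  have hprod : LinearMap.det (fderiv ℝ Φ (h₁, h₂)).toLinearMap =
      ∏ i, Real.exp (s h₁ i) := by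
    apply det_block_aux f (F - f) (fun i => Real.exp (s h₁ i))
    · intro x
      rw [hfd]
      simp
    · intro v i
      rw [hfd]
      simp [mul_comm]
  have hsum : LinearMap.det (fderiv ℝ Φ (h₁, h₂)).toLinearMap =
      Real.exp (∑ i, s h₁ i) := by
    rw [hprod, Real.exp_sum]
  refine ⟨hdiff, hsum, hprod, ?_⟩
  rw [hsum]
  exact Real.exp_pos _
end
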